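/- For the word w consisting of m copies of the letter 0, the weights are b_0^(w) = 2/3 - 2/(3(3^{2m}+1)) and b_1^(w) = b_2^(w) = 1/6 + 1/(3(3^{2m}+1)). Consequently sum_{j=0}^{2} (b_j^(w) - 1/3)^2 tends to 1/6 as m tends to infinity, and the supremum over all finite words w over {0,1,2} of sum_{j=0}^{2} (b_j^(w) - 1/3)^2 equals 1/6 (and is not attained). -/

import Mathlib

open Matrix BigOperators

/-- The matrix `M_0`. -/
noncomputable def M0 : Matrix (Fin 3) (Fin 3) ℝ :=
  (1 / 15 : ℝ) • !![9, 0, 0; 2, 2, -1; 2, -1, 2]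

/-- The matrix `M_1`. -/
noncomputable def M1 : Matrix (Fin 3) (Fin 3) ℝ :=
  (1 / 15 : ℝ) • !![2, 2, -1; 0, 9, 0; -1, 2, 2]

/-- The matrix `M_2`. -/
noncomputable def M2 : Matrix (Fin 3) (Fin 3) ℝ :=
  (1 / 15 : ℝ) • !![2, -1, 2; -1, 2, 2; 0, 0, 9]

/-- `Mmat i` is the matrix `M_i`. -/
noncomputable def Mmat : Fin 3 → Matrix (Fin 3) (Fin 3) ℝ := ![M0, M1, M2]

/-- For a word `w = [w₁, ..., wₘ]`, `Mword w = M_{w₁} * ⋯ * M_{wₘ}`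
(the empty word giving the identity matrix). -/
noncomputable def Mword (w : List (Fin 3)) : Matrix (Fin 3) (Fin 3) ℝ :=
  (w.map Mmat).prod

/-- The `j`-th column `z_j` of `M_w`, as a vector in `ℝ³`. -/
noncomputable def zcol (w : List (Fin 3)) (j : Fin 3) : Fin 3 → ℝ :=
  fun i => Mword w i j

/-- The vector `z = z₀ + z₁ + z₂`, the sum of the columns of `M_w`. -/
noncomputable def zvec (w : List (Fin 3)) : Fin 3 → ℝ :=
  fun i => ∑ j : Fin 3, Mword w i j

/-- `c_j^(w)`, the `j`-th column sum of `M_w`, i.e. the `j`-th entry of `(1,1,1) M_w`. -/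
noncomputable def cw (w : List (Fin 3)) (j : Fin 3) : ℝ :=
  ∑ i : Fin 3, Mword w i j

/-- `S^(w) = c₀^(w) + c₁^(w) + c₂^(w)`, the sum of all entries of `M_w`. -/
noncomputable def Sw (w : List (Fin 3)) : ℝ :=
  ∑ j : Fin 3, cw w j

/-- The weight `b_j^(w) = 1/6 + c_j^(w) / (2 S^(w))`. -/
noncomputable def bwt (w : List (Fin 3)) (j : Fin 3) : ℝ :=
  1 / 6 + cw w j / (2 * Sw w)

noncomputable def Pm (m : ℕ) : Matrix (Fin 3) (Fin 3) ℝ :=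
  Matrix.of fun i j =>
    ((15:ℝ)^m)⁻¹ *
      (if i = 0 then (if j = 0 then (9:ℝ)^m else 0)
       else if j = 0 then ((9:ℝ)^m-1)/4
       else if i = j then ((3:ℝ)^m+1)/2 else (1-(3:ℝ)^m)/2)

lemma Mword_cons (a : Fin 3) (w : List (Fin 3)) : Mword (a :: w) = Mmat a * Mword w := by
  simp [Mword]

lemma Mword_replicate (m : ℕ) : Mword (List.replicate m 0) = Pm m := by
  induction m with
  | zero =>
    ext i j
    fin_cases i <;> fin_cases j <;>
      simp [Mword, Pm, Matrix.one_apply]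
  | succ m ih =>
    rw [List.replicate_succ, Mword_cons, ih]
    have h15 : (15:ℝ)^m ≠ 0 := by positivity
    show M0 * Pm m = Pm (m+1)
    ext i j
    fin_cases i <;> fin_cases j <;>
      simp [Matrix.mul_apply, Fin.sum_univ_three, M0, Pm, pow_succ] <;>
      field_simp <;> ring

lemma pow_two_mul (m : ℕ) : (3:ℝ) ^ (2*m) = 9 ^ m := by
  rw [pow_mul]; norm_num

lemma cw_rep (m : ℕ) :
    cw (List.replicate m 0) 0 = (3*(9:ℝ)^m - 1)/(2*15^m) ∧
    cw (List.replicate m 0) 1 = ((15:ℝ)^m)⁻¹ ∧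
    cw (List.replicate m 0) 2 = ((15:ℝ)^m)⁻¹ := by
  have h15 : (15:ℝ)^m ≠ 0 := by positivity
  refine ⟨?_, ?_, ?_⟩ <;>
    · simp [cw, Mword_replicate, Pm, Fin.sum_univ_three]
      field_simp
      ring

lemma Sw_rep (m : ℕ) : Sw (List.replicate m 0) = 3*((9:ℝ)^m + 1)/(2*15^m) := by
  obtain ⟨h0, h1, h2⟩ := cw_rep m
  have h15 : (15:ℝ)^m ≠ 0 := by positivity
  simp [Sw, Fin.sum_univ_three, h0, h1, h2]
  field_simp
  ring

lemma bwt_rep (m : ℕ) :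
    bwt (List.replicate m 0) 0 = 2 / 3 - 2 / (3 * ((3 : ℝ) ^ (2 * m) + 1)) ∧
    bwt (List.replicate m 0) 1 = 1 / 6 + 1 / (3 * ((3 : ℝ) ^ (2 * m) + 1)) ∧
    bwt (List.replicate m 0) 2 = 1 / 6 + 1 / (3 * ((3 : ℝ) ^ (2 * m) + 1)) := by
  obtain ⟨h0, h1, h2⟩ := cw_rep m
  have h15 : (15:ℝ)^m ≠ 0 := by positivity
  have h9 : (0:ℝ) < (9:ℝ)^m + 1 := by positivity
  have h9' : ((9:ℝ)^m + 1) ≠ 0 := ne_of_gt h9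
  refine ⟨?_, ?_, ?_⟩ <;>
    · simp only [bwt, Sw_rep, h0, h1, h2, pow_two_mul]
      field_simp
      all_goals ring

lemma Mword_append (w : List (Fin 3)) (a : Fin 3) :
    Mword (w ++ [a]) = Mword w * Mmat a := by
  simp [Mword]

lemma cw_append (w : List (Fin 3)) (a : Fin 3) (j : Fin 3) :
    cw (w ++ [a]) j = ∑ k : Fin 3, cw w k * Mmat a k j := by
  simp only [cw, Mword_append, Matrix.mul_apply]
  rw [Finset.sum_comm]
  simp [Finset.sum_mul]

lemma cw_entry (w : List (Fin 3)) (a j : Fin 3) :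
    cw (w ++ [a]) j = ∑ k : Fin 3, cw w k * Mmat a k j := cw_append w a j

lemma key_step0 (w : List (Fin 3))
    (hs : 0 < cw w 0 + cw w 1 + cw w 2)
    (hq : 0 < cw w 0 * cw w 1 + cw w 0 * cw w 2 + cw w 1 * cw w 2) :
    0 < Sw (w ++ [0]) ∧
      0 < cw (w ++ [0]) 0 * cw (w ++ [0]) 1 + cw (w ++ [0]) 0 * cw (w ++ [0]) 2 +
          cw (w ++ [0]) 1 * cw (w ++ [0]) 2 := by
  set x := cw w 0
  set y := cw w 1
  set z := cw w 2
  have e0 : cw (w ++ [0]) 0 = (9*x + 2*y + 2*z)/15 := by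
    rw [cw_append]
    simp only [Fin.sum_univ_three, Mmat, M0, Matrix.smul_apply, smul_eq_mul,
      Matrix.cons_val_zero, Matrix.cons_val_one, Matrix.head_cons]
    norm_num [Matrix.cons_val_zero, Matrix.cons_val_one, Matrix.head_cons, Matrix.cons_val_two, Matrix.tail_cons, Matrix.vecHead, Matrix.vecTail, Function.comp]
    ring
  have e1 : cw (w ++ [0]) 1 = (2*y - z)/15 := by
    rw [cw_append]
    simp only [Fin.sum_univ_three, Mmat, M0, Matrix.smul_apply, smul_eq_mul,
      Matrix.cons_val_zero, Matrix.cons_val_one, Matrix.head_cons]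
    norm_num [Matrix.cons_val_zero, Matrix.cons_val_one, Matrix.head_cons, Matrix.cons_val_two, Matrix.tail_cons, Matrix.vecHead, Matrix.vecTail, Function.comp]
    ring
  have e2 : cw (w ++ [0]) 2 = (-y + 2*z)/15 := by
    rw [cw_append]
    simp only [Fin.sum_univ_three, Mmat, M0, Matrix.smul_apply, smul_eq_mul,
      Matrix.cons_val_zero, Matrix.cons_val_one, Matrix.head_cons]
    norm_num [Matrix.cons_val_zero, Matrix.cons_val_one, Matrix.head_cons, Matrix.cons_val_two, Matrix.tail_cons, Matrix.vecHead, Matrix.vecTail, Function.comp]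
    ring
  have hSw : Sw (w ++ [0]) = cw (w ++ [0]) 0 + cw (w ++ [0]) 1 + cw (w ++ [0]) 2 := by
    simp [Sw, Fin.sum_univ_three]
  constructor
  · rw [hSw, e0, e1, e2]
    nlinarith [sq_nonneg (y - z), sq_nonneg x, mul_pos hs hs]
  · rw [e0, e1, e2]
    nlinarith [hq]

lemma key_step1 (w : List (Fin 3))
    (hs : 0 < cw w 0 + cw w 1 + cw w 2)
    (hq : 0 < cw w 0 * cw w 1 + cw w 0 * cw w 2 + cw w 1 * cw w 2) :
    0 < Sw (w ++ [1]) ∧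
      0 < cw (w ++ [1]) 0 * cw (w ++ [1]) 1 + cw (w ++ [1]) 0 * cw (w ++ [1]) 2 +
          cw (w ++ [1]) 1 * cw (w ++ [1]) 2 := by
  set x := cw w 0
  set y := cw w 1
  set z := cw w 2
  have e0 : cw (w ++ [1]) 0 = (2*x - z)/15 := by
    rw [cw_append]
    simp only [Fin.sum_univ_three, Mmat, M1, Matrix.smul_apply, smul_eq_mul,
      Matrix.cons_val_zero, Matrix.cons_val_one, Matrix.head_cons]
    norm_num [Matrix.cons_val_zero, Matrix.cons_val_one, Matrix.head_cons, Matrix.cons_val_two, Matrix.tail_cons, Matrix.vecHead, Matrix.vecTail, Function.comp]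
    ring
  have e1 : cw (w ++ [1]) 1 = (2*x + 9*y + 2*z)/15 := by
    rw [cw_append]
    simp only [Fin.sum_univ_three, Mmat, M1, Matrix.smul_apply, smul_eq_mul,
      Matrix.cons_val_zero, Matrix.cons_val_one, Matrix.head_cons]
    norm_num [Matrix.cons_val_zero, Matrix.cons_val_one, Matrix.head_cons, Matrix.cons_val_two, Matrix.tail_cons, Matrix.vecHead, Matrix.vecTail, Function.comp]
    ring
  have e2 : cw (w ++ [1]) 2 = (-x + 2*z)/15 := by
    rw [cw_append]
    simp only [Fin.sum_univ_three, Mmat, M1, Matrix.smul_apply, smul_eq_mul,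
      Matrix.cons_val_zero, Matrix.cons_val_one, Matrix.head_cons]
    norm_num [Matrix.cons_val_zero, Matrix.cons_val_one, Matrix.head_cons, Matrix.cons_val_two, Matrix.tail_cons, Matrix.vecHead, Matrix.vecTail, Function.comp]
    ring
  have hSw : Sw (w ++ [1]) = cw (w ++ [1]) 0 + cw (w ++ [1]) 1 + cw (w ++ [1]) 2 := by
    simp [Sw, Fin.sum_univ_three]
  constructor
  · rw [hSw, e0, e1, e2]
    nlinarith [sq_nonneg (x - z), sq_nonneg y, mul_pos hs hs]
  · rw [e0, e1, e2]
    nlinarith [hq]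

lemma key_step2 (w : List (Fin 3))
    (hs : 0 < cw w 0 + cw w 1 + cw w 2)
    (hq : 0 < cw w 0 * cw w 1 + cw w 0 * cw w 2 + cw w 1 * cw w 2) :
    0 < Sw (w ++ [2]) ∧
      0 < cw (w ++ [2]) 0 * cw (w ++ [2]) 1 + cw (w ++ [2]) 0 * cw (w ++ [2]) 2 +
          cw (w ++ [2]) 1 * cw (w ++ [2]) 2 := by
  set x := cw w 0
  set y := cw w 1
  set z := cw w 2
  have e0 : cw (w ++ [2]) 0 = (2*x - y)/15 := by
    rw [cw_append]
    simp only [Fin.sum_univ_three, Mmat, M2, Matrix.smul_apply, smul_eq_mul,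
      Matrix.cons_val_zero, Matrix.cons_val_one, Matrix.head_cons]
    norm_num [Matrix.cons_val_zero, Matrix.cons_val_one, Matrix.head_cons, Matrix.cons_val_two, Matrix.tail_cons, Matrix.vecHead, Matrix.vecTail, Function.comp]
    ring
  have e1 : cw (w ++ [2]) 1 = (-x + 2*y)/15 := by
    rw [cw_append]
    simp only [Fin.sum_univ_three, Mmat, M2, Matrix.smul_apply, smul_eq_mul,
      Matrix.cons_val_zero, Matrix.cons_val_one, Matrix.head_cons]
    norm_num [Matrix.cons_val_zero, Matrix.cons_val_one, Matrix.head_cons, Matrix.cons_val_two, Matrix.tail_cons, Matrix.vecHead, Matrix.vecTail, Function.comp]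
    ring
  have e2 : cw (w ++ [2]) 2 = (2*x + 2*y + 9*z)/15 := by
    rw [cw_append]
    simp only [Fin.sum_univ_three, Mmat, M2, Matrix.smul_apply, smul_eq_mul,
      Matrix.cons_val_zero, Matrix.cons_val_one, Matrix.head_cons]
    norm_num [Matrix.cons_val_zero, Matrix.cons_val_one, Matrix.head_cons, Matrix.cons_val_two, Matrix.tail_cons, Matrix.vecHead, Matrix.vecTail, Function.comp]
    ring
  have hSw : Sw (w ++ [2]) = cw (w ++ [2]) 0 + cw (w ++ [2]) 1 + cw (w ++ [2]) 2 := by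
    simp [Sw, Fin.sum_univ_three]
  constructor
  · rw [hSw, e0, e1, e2]
    nlinarith [sq_nonneg (x - y), sq_nonneg z, mul_pos hs hs]
  · rw [e0, e1, e2]
    nlinarith [hq]

lemma key (w : List (Fin 3)) :
    0 < Sw w ∧ 0 < cw w 0 * cw w 1 + cw w 0 * cw w 2 + cw w 1 * cw w 2 := by
  induction w using List.reverseRecOn with
  | nil =>
    have h : ∀ j : Fin 3, cw ([] : List (Fin 3)) j = 1 := by
      intro j
      simp [cw, Mword, Matrix.one_apply, Finset.sum_ite_eq]
    constructor
    · rw [show Sw ([] : List (Fin 3)) = cw [] 0 + cw [] 1 + cw [] 2 from by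
        simp [Sw, Fin.sum_univ_three]]
      rw [h 0, h 1, h 2]; norm_num
    · rw [h 0, h 1, h 2]; norm_num
  | append_singleton w a ih =>
    obtain ⟨hs, hq⟩ := ih
    have hSw : Sw w = cw w 0 + cw w 1 + cw w 2 := by simp [Sw, Fin.sum_univ_three]
    rw [hSw] at hs
    fin_cases a
    · exact key_step0 w hs hq
    · exact key_step1 w hs hq
    · exact key_step2 w hs hq

lemma sum_lt (w : List (Fin 3)) : ∑ j : Fin 3, (bwt w j - 1/3)^2 < 1/6 := by
  obtain ⟨hs, hq⟩ := key w
  have hSw : Sw w = cw w 0 + cw w 1 + cw w 2 := by simp [Sw, Fin.sum_univ_three]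
  have hsne : Sw w ≠ 0 := ne_of_gt hs
  rw [hSw] at hs hsne
  have hid : ∑ j : Fin 3, (bwt w j - 1/3)^2 =
      1/6 - (cw w 0 * cw w 1 + cw w 0 * cw w 2 + cw w 1 * cw w 2) /
        (2 * (cw w 0 + cw w 1 + cw w 2)^2) := by
    simp only [bwt, hSw, Fin.sum_univ_three]
    field_simp
    ring
  rw [hid]
  have : 0 < (cw w 0 * cw w 1 + cw w 0 * cw w 2 + cw w 1 * cw w 2) /
      (2 * (cw w 0 + cw w 1 + cw w 2)^2) := div_pos hq (by positivity)
  linarith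

lemma sum_rep (m : ℕ) :
    ∑ j : Fin 3, (bwt (List.replicate m 0) j - 1/3)^2 =
      1/6 - 2*((3*((9:ℝ)^m+1))⁻¹) + 6*((3*((9:ℝ)^m+1))⁻¹)^2 := by
  obtain ⟨b0, b1, b2⟩ := bwt_rep m
  rw [Fin.sum_univ_three, b0, b1, b2, pow_two_mul]
  rw [div_eq_mul_inv, div_eq_mul_inv]
  ring

lemma tendsto_sum :
    Filter.Tendsto
      (fun m : ℕ => ∑ j : Fin 3, (bwt (List.replicate m 0) j - 1 / 3) ^ 2)
      Filter.atTop (nhds (1 / 6)) := by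
  have h1 : Filter.Tendsto (fun m : ℕ => (9:ℝ)^m) Filter.atTop Filter.atTop :=
    tendsto_pow_atTop_atTop_of_one_lt (by norm_num)
  have h2 : Filter.Tendsto (fun m : ℕ => 3*((9:ℝ)^m+1)) Filter.atTop Filter.atTop := by
    apply Filter.Tendsto.const_mul_atTop (by norm_num : (0:ℝ) < 3)
    exact Filter.tendsto_atTop_add_const_right _ 1 h1
  have hδ : Filter.Tendsto (fun m : ℕ => (3*((9:ℝ)^m+1))⁻¹) Filter.atTop (nhds 0) :=
    h2.inv_tendsto_atTop
  have := ((tendsto_const_nhds (x := (1/6:ℝ)) (f := Filter.atTop (α := ℕ))).sub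
      (hδ.const_mul 2)).add ((hδ.pow 2).const_mul 6)
  simp only [sum_rep]
  convert this using 2
  norm_num


/-- For the word consisting of `m` copies of the letter `0`:
`b₀ = 2/3 - 2/(3(3^{2m}+1))`, `b₁ = b₂ = 1/6 + 1/(3(3^{2m}+1))`; consequently
`∑_j (b_j - 1/3)²` tends to `1/6` as `m → ∞`, and the supremum over all words of
`∑_j (b_j^(w) - 1/3)²` equals `1/6` and is not attained. -/
theorem stmt_16 :
    (∀ m : ℕ,
      bwt (List.replicate m 0) 0 = 2 / 3 - 2 / (3 * ((3 : ℝ) ^ (2 * m) + 1)) ∧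
      bwt (List.replicate m 0) 1 = 1 / 6 + 1 / (3 * ((3 : ℝ) ^ (2 * m) + 1)) ∧
      bwt (List.replicate m 0) 2 = 1 / 6 + 1 / (3 * ((3 : ℝ) ^ (2 * m) + 1))) ∧
    Filter.Tendsto
      (fun m : ℕ => ∑ j : Fin 3, (bwt (List.replicate m 0) j - 1 / 3) ^ 2)
      Filter.atTop (nhds (1 / 6)) ∧
    sSup {x : ℝ | ∃ w : List (Fin 3), ∑ j : Fin 3, (bwt w j - 1 / 3) ^ 2 = x}
      = 1 / 6 ∧
    (1 / 6 : ℝ) ∉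
      {x : ℝ | ∃ w : List (Fin 3), ∑ j : Fin 3, (bwt w j - 1 / 3) ^ 2 = x} := by
  have hub : ∀ x ∈ {x : ℝ | ∃ w : List (Fin 3), ∑ j : Fin 3, (bwt w j - 1 / 3) ^ 2 = x},
      x ≤ 1/6 := by
    rintro x ⟨w, hw⟩
    exact hw ▸ (sum_lt w).le
  refine ⟨bwt_rep, tendsto_sum, ?_, ?_⟩
  · apply le_antisymm
    · exact Real.sSup_le hub (by norm_num)
    · refine le_of_tendsto tendsto_sum (Filter.Eventually.of_forall fun m => ?_)
      exact le_csSup ⟨1/6, hub⟩ ⟨List.replicate m 0, rfl⟩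
  · rintro ⟨w, hw⟩
    exact (sum_lt w).ne hw
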